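/- (Lower estimate) Let R > q > p > 1, f analytic in D_R with f not a polynomial of degree ≤ 1, and fix suitable 1 ≤ r < r_1. Then there is a constant C_{r,r_1,p,q}(f) > 0 depending only on f, r, r_1, p, q such that ‖L_{n,p,q}(f) - f‖_r ≥ (p^n/[n]_{p,q}) · C_{r,r_1,p,q}(f) for all n ∈ ℕ, where ‖g‖_r = max_{|z|≤r} |g(z)|. -/

import Mathlib

/-- The `(p,q)`-integer `[n]_{p,q} = (q^n - p^n)/(q - p)`. -/
noncomputable def pqInt (p q : ℝ) (n : ℕ) : ℝ := (q ^ n - p ^ n) / (q - p)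

/-- The `(p,q)`-factorial `[n]_{p,q}! = [1]_{p,q}·[2]_{p,q}···[n]_{p,q}`. -/
noncomputable def pqFact (p q : ℝ) : ℕ → ℝ
  | 0 => 1
  | n + 1 => pqFact p q n * pqInt p q (n + 1)

/-- The `(p,q)`-binomial coefficient. -/
noncomputable def pqBinom (p q : ℝ) (n k : ℕ) : ℝ :=
  pqFact p q n / (pqFact p q k * pqFact p q (n - k))

/-- The `(p,q)`-derivative, with `D_{p,q}f(0) = f'(0)`. -/
noncomputable def pqDeriv (p q : ℝ) (f : ℂ → ℂ) (x : ℂ) : ℂ :=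
  if x = 0 then deriv f 0 else (f ((p : ℂ) * x) - f ((q : ℂ) * x)) / (((p : ℂ) - q) * x)

/-- Iterated `(p,q)`-derivative `D_{p,q}^{(k)}`. -/
noncomputable def pqDerivIter (p q : ℝ) : ℕ → (ℂ → ℂ) → (ℂ → ℂ)
  | 0, f => f
  | k + 1, f => pqDeriv p q (pqDerivIter p q k f)

/-- The complex `(p,q)`-Lorentz polynomial
`L_{n,p,q}(f)(z) = Σ_{k=0}^{n} q^{k(k-1)/2} binom(n,k)_{p,q} (z/[n]_{p,q})^k D_{p,q}^{(k)}f(0)`. -/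
noncomputable def lorentz (p q : ℝ) (n : ℕ) (f : ℂ → ℂ) (z : ℂ) : ℂ :=
  ∑ k ∈ Finset.range (n + 1),
    (q : ℂ) ^ (k * (k - 1) / 2) * (pqBinom p q n k : ℂ) *
      (z / (pqInt p q n : ℂ)) ^ k * pqDerivIter p q k f 0

/-- `‖g‖_r = max_{|z| ≤ r} |g(z)|`. -/
noncomputable def supNorm (r : ℝ) (g : ℂ → ℂ) : ℝ :=
  sSup ((fun z => ‖g z‖) '' Metric.closedBall (0 : ℂ) r)

open Finset Metric FormalMultilinearSeries

/-! ### Arithmetic auxiliary lemmas -/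

section arith
set_option linter.unusedSectionVars false
variable {p q : ℝ} (hp : 1 < p) (hpq : p < q)
include hp hpq

lemma pqInt_pos {n : ℕ} (hn : 1 ≤ n) : 0 < pqInt p q n := by
  have h0 : (0:ℝ) < p := lt_trans one_pos hp
  exact div_pos (sub_pos.2 (pow_lt_pow_left₀ hpq h0.le (by omega))) (sub_pos.2 hpq)

lemma pqInt_nonneg (n : ℕ) : 0 ≤ pqInt p q n := by
  cases n with
  | zero => simp [pqInt]
  | succ m => exact (pqInt_pos hp hpq (by omega)).le

lemma pqInt_one : pqInt p q 1 = 1 := by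
  have : q - p ≠ 0 := sub_ne_zero.2 (ne_of_gt hpq)
  simp [pqInt, div_self this]

lemma pqFact_pos (k : ℕ) : 0 < pqFact p q k := by
  induction k with
  | zero => norm_num [pqFact]
  | succ n ih => exact mul_pos ih (pqInt_pos hp hpq (by omega))

lemma pqFact_eq_prod (k : ℕ) : pqFact p q k = ∏ i ∈ Finset.range k, pqInt p q (i + 1) := by
  induction k with
  | zero => simp [pqFact]
  | succ n ih => rw [pqFact, ih, Finset.prod_range_succ]

lemma pqInt_ge {n : ℕ} (hn : 1 ≤ n) : p ^ (n - 1) ≤ pqInt p q n := by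
  have h0 : (0:ℝ) < p := lt_trans one_pos hp
  rw [pqInt, le_div_iff₀ (sub_pos.2 hpq)]
  have h1 : p ^ (n-1) * q ≤ q ^ (n-1) * q := by
    have := pow_le_pow_left₀ h0.le hpq.le (n-1)
    nlinarith [lt_trans h0 hpq]
  have h2 : q ^ (n-1) * q = q ^ n := by
    rw [← pow_succ]; congr 1; omega
  have h3 : p ^ (n-1) * p = p ^ n := by
    rw [← pow_succ]; congr 1; omega
  nlinarith

lemma pqInt_key {j n : ℕ} (hj : j ≤ n) :
    q ^ j * pqInt p q (n - j) = pqInt p q n - p ^ (n - j) * pqInt p q j := by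
  have hqp : q - p ≠ 0 := sub_ne_zero.2 (ne_of_gt hpq)
  have e1 : (q:ℝ) ^ n = q ^ j * q ^ (n - j) := by rw [← pow_add]; congr 1; omega
  have e2 : (p:ℝ) ^ n = p ^ (n - j) * p ^ j := by rw [← pow_add]; congr 1; omega
  unfold pqInt
  field_simp
  ring_nf
  nlinarith [e1, e2]

lemma pqFact_sub {k n : ℕ} (hk : k ≤ n) :
    pqFact p q n = pqFact p q (n - k) * ∏ j ∈ Finset.range k, pqInt p q (n - j) := by
  induction k with
  | zero => simp
  | succ m ih =>
    have hm : m ≤ n := by omega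
    have h1 : n - m = (n - (m+1)) + 1 := by omega
    rw [ih hm, Finset.prod_range_succ, h1, pqFact, ← h1]
    ring

lemma b_eq {k n : ℕ} (hk : k ≤ n) :
    q ^ (k * (k-1) / 2) * pqBinom p q n k * pqFact p q k / pqInt p q n ^ k
      = ∏ j ∈ Finset.range k, (q ^ j * pqInt p q (n - j) / pqInt p q n) := by
  have hfk := pqFact_pos hp hpq k
  have hfnk := pqFact_pos hp hpq (n - k)
  have h1 : pqBinom p q n k * pqFact p q k = ∏ j ∈ Finset.range k, pqInt p q (n - j) := by
    rw [pqBinom, pqFact_sub hp hpq hk]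
    field_simp
  have h2 : (q : ℝ) ^ (k * (k-1) / 2) = ∏ j ∈ Finset.range k, q ^ j := by
    rw [Finset.prod_pow_eq_pow_sum, Finset.sum_range_id]
  rw [mul_assoc, h1, h2, Finset.prod_div_distrib, Finset.prod_mul_distrib]
  congr 1
  rw [Finset.prod_const, Finset.card_range]

lemma b_le {k n : ℕ} (hk2 : 2 ≤ k) (hkn : k ≤ n) :
    q ^ (k * (k-1) / 2) * pqBinom p q n k * pqFact p q k / pqInt p q n ^ k
      ≤ 1 - p ^ (n-1) / pqInt p q n := by
  have hn : 0 < pqInt p q n := pqInt_pos hp hpq (by omega)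
  have h0 : (0:ℝ) < p := lt_trans one_pos hp
  have hq0 : (0:ℝ) < q := lt_trans h0 hpq
  rw [b_eq hp hpq hkn]
  set F : ℕ → ℝ := fun j => q ^ j * pqInt p q (n - j) / pqInt p q n with hF
  have hnonneg : ∀ j, 0 ≤ F j := fun j =>
    div_nonneg (mul_nonneg (pow_nonneg hq0.le j) (pqInt_nonneg hp hpq _)) hn.le
  have hle1 : ∀ j ≤ n, F j ≤ 1 := by
    intro j hj
    rw [hF]
    simp only []
    rw [div_le_one hn, pqInt_key hp hpq hj]
    have : 0 ≤ p ^ (n - j) * pqInt p q j :=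
      mul_nonneg (pow_nonneg h0.le _) (pqInt_nonneg hp hpq _)
    linarith
  have h1mem : 1 ∈ Finset.range k := Finset.mem_range.2 (by omega)
  have hF1 : F 1 = 1 - p ^ (n-1) / pqInt p q n := by
    rw [hF]
    simp only [pow_one]
    have key := pqInt_key hp hpq (by omega : 1 ≤ n)
    rw [pow_one] at key
    rw [div_eq_iff hn.ne', key, pqInt_one hp hpq]
    field_simp
  calc ∏ j ∈ Finset.range k, F j
      = F 1 * ∏ j ∈ (Finset.range k).erase 1, F j := (Finset.mul_prod_erase _ _ h1mem).symm
    _ ≤ F 1 * 1 := by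
        apply mul_le_mul_of_nonneg_left _ (hnonneg 1)
        exact Finset.prod_le_one (fun j _ => hnonneg j)
          (fun j hj => hle1 j (by
            have := Finset.mem_range.1 (Finset.mem_of_mem_erase hj); omega))
    _ = 1 - p ^ (n-1) / pqInt p q n := by rw [mul_one, hF1]

end arith

/-! ### Power-series auxiliary lemmas -/

section series
variable {a : ℕ → ℂ} {g : ℂ → ℂ} {ρ : ℝ}

lemma hasFPB (hg : ∀ z : ℂ, ‖z‖ < ρ → HasSum (fun m => a m * z ^ m) (g z))
    {r' : ℝ} (h0 : 0 < r') (hr' : r' < ρ) :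
    HasFPowerSeriesOnBall g (ofScalars ℂ a) 0 (ENNReal.ofReal r') := by
  constructor
  · have hmem : ‖(r' : ℂ)‖ < ρ := by
      rw [Complex.norm_real, Real.norm_eq_abs, abs_of_pos h0]; exact hr'
    have hs : Summable (fun m => a m * (r' : ℂ) ^ m) := (hg _ hmem).summable
    have ht : Filter.Tendsto (fun m => ‖a m * (r' : ℂ) ^ m‖) Filter.atTop (nhds 0) := by
      rw [← tendsto_zero_iff_norm_tendsto_zero]
      exact hs.tendsto_atTop_zero
    have hbig : (fun n => ‖ofScalars ℂ a n‖ * (r'.toNNReal : ℝ) ^ n) =O[Filter.atTop]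
        (fun _ => (1 : ℝ)) := by
      apply Filter.Tendsto.isBigO_one
      refine ht.congr (fun m => ?_)
      rw [norm_mul, norm_pow, Complex.norm_real, Real.norm_eq_abs, abs_of_pos h0,
        ofScalars_norm, Real.coe_toNNReal _ h0.le]
    have := (ofScalars ℂ a).le_radius_of_isBigO hbig
    rwa [ENNReal.ofReal, ← Real.toNNReal_coe (r := r'.toNNReal), Real.toNNReal_coe]
  · simp [h0]
  · intro y hy
    rw [EMetric.mem_ball, edist_zero_right] at hy
    have h1 : ‖y‖₊ < r'.toNNReal := by
      rw [ENNReal.ofReal] at hy; exact_mod_cast hy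
    have hy' : ‖y‖ < r' := by
      have h2 := NNReal.coe_lt_coe.2 h1
      rwa [coe_nnnorm, Real.coe_toNNReal _ h0.le] at h2
    simp only [ofScalars_apply_eq, smul_eq_mul, zero_add]
    exact hg y (lt_trans hy' hr')

lemma deriv_zero_of_hasSum (hρ : 0 < ρ)
    (hg : ∀ z : ℂ, ‖z‖ < ρ → HasSum (fun m => a m * z ^ m) (g z)) :
    deriv g 0 = a 1 := by
  have h := (hasFPB hg (half_pos hρ) (half_lt_self hρ)).hasFPowerSeriesAt.deriv
  rw [h]
  have := ofScalars_apply_eq (E := ℂ) a (1 : ℂ) 1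
  simp only [smul_eq_mul, one_pow, mul_one] at this
  exact this

lemma coeff_bound {r : ℝ} (hr : 0 < r) (hrρ : r < ρ)
    (hg : ∀ z : ℂ, ‖z‖ < ρ → HasSum (fun m => a m * z ^ m) (g z)) (k : ℕ) :
    ‖a k‖ * r ^ k ≤ supNorm r g := by
  have hρ0 : 0 < ρ := lt_trans hr hrρ
  set r₂ : ℝ := (r + ρ) / 2 with hr₂
  have h02 : 0 < r₂ := by positivity
  have hrr₂ : r < r₂ := by rw [hr₂]; linarith
  have hr₂ρ : r₂ < ρ := by rw [hr₂]; linarith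
  have hball := hasFPB hg h02 hr₂ρ
  have hdiff : DifferentiableOn ℂ g (closedBall (0:ℂ) r) := by
    intro z hz
    have hz' : z ∈ Metric.eball (0:ℂ) (ENNReal.ofReal r₂) := by
      rw [Metric.mem_eball, edist_zero_right, ← ofReal_norm]
      exact ENNReal.ofReal_lt_ofReal_iff h02 |>.2
        (lt_of_le_of_lt (mem_closedBall_zero_iff.1 hz) hrr₂)
    exact ((hball.analyticAt_of_mem hz').differentiableAt).differentiableWithinAt
  have hcont : ContinuousOn (fun z => ‖g z‖) (closedBall (0:ℂ) r) :=
    continuous_norm.comp_continuousOn hdiff.continuousOn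
  have hbdd : BddAbove ((fun z => ‖g z‖) '' closedBall (0:ℂ) r) :=
    ((isCompact_closedBall (0:ℂ) r).image_of_continuousOn hcont).bddAbove
  set M := supNorm r g with hM
  have hMle : ∀ z ∈ closedBall (0:ℂ) r, ‖g z‖ ≤ M := by
    intro z hz
    exact le_csSup hbdd ⟨z, hz, rfl⟩
  have hM0 : 0 ≤ M := le_trans (norm_nonneg _) (hMle 0 (mem_closedBall_self hr.le))
  set rn : NNReal := ⟨r, hr.le⟩ with hrn
  have hrnr : (rn : ℝ) = r := rfl
  have hdiff' : DifferentiableOn ℂ g (closedBall (0:ℂ) (rn : ℝ)) := by rwa [hrnr]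
  have hQ : HasFPowerSeriesOnBall g (cauchyPowerSeries g 0 rn) 0 rn :=
    hdiff'.hasFPowerSeriesOnBall (by exact_mod_cast hr)
  have hEq : ofScalars ℂ a = cauchyPowerSeries g 0 rn :=
    hball.hasFPowerSeriesAt.eq_formalMultilinearSeries hQ.hasFPowerSeriesAt
  have hInt : (∫ θ : ℝ in (0)..2 * Real.pi, ‖g (circleMap 0 (rn:ℝ) θ)‖) ≤ 2 * Real.pi * M := by
    have hb : ∀ θ ∈ Set.uIoc (0:ℝ) (2 * Real.pi), ‖‖g (circleMap 0 (rn:ℝ) θ)‖‖ ≤ M := by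
      intro θ _
      rw [Real.norm_eq_abs, abs_of_nonneg (norm_nonneg _)]
      apply hMle
      rw [mem_closedBall_zero_iff, norm_circleMap_zero, hrnr,
        abs_of_pos hr]
    have hb2 := intervalIntegral.norm_integral_le_of_norm_le_const hb
    rw [Real.norm_eq_abs] at hb2
    calc (∫ θ : ℝ in (0)..2 * Real.pi, ‖g (circleMap 0 (rn:ℝ) θ)‖)
        ≤ |∫ θ : ℝ in (0)..2 * Real.pi, ‖g (circleMap 0 (rn:ℝ) θ)‖| := le_abs_self _
      _ ≤ M * |2 * Real.pi - 0| := hb2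
      _ = 2 * Real.pi * M := by
          rw [sub_zero, abs_of_pos Real.two_pi_pos]; ring
  have hcoef : ‖a k‖ ≤ M * (r⁻¹) ^ k := by
    have h1 : ‖cauchyPowerSeries g 0 rn k‖ ≤
        ((2 * Real.pi)⁻¹ * ∫ θ : ℝ in (0)..2 * Real.pi, ‖g (circleMap 0 (rn:ℝ) θ)‖) *
          |(rn:ℝ)|⁻¹ ^ k := norm_cauchyPowerSeries_le g 0 (rn:ℝ) k
    have h2 : ‖a k‖ = ‖cauchyPowerSeries g 0 rn k‖ := by
      rw [← hEq, ofScalars_norm]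
    rw [h2]
    refine le_trans h1 ?_
    rw [hrnr, abs_of_pos hr]
    apply mul_le_mul_of_nonneg_right _ (by positivity)
    rw [inv_mul_le_iff₀ Real.two_pi_pos]
    exact hInt
  calc ‖a k‖ * r ^ k ≤ (M * (r⁻¹) ^ k) * r ^ k :=
        mul_le_mul_of_nonneg_right hcoef (by positivity)
    _ = M := by rw [mul_assoc, ← mul_pow, inv_mul_cancel₀ hr.ne', one_pow, mul_one]

end series

/-! ### Iterated `(p,q)`-derivative of a power series -/

section iter
variable {p q R : ℝ} {f : ℂ → ℂ} {c : ℕ → ℂ}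

lemma iter_rep (hp : 1 < p) (hpq : p < q) (hR : 0 < R)
    (hf : ∀ z : ℂ, ‖z‖ < R → HasSum (fun m => c m * z ^ m) (f z)) (k : ℕ) :
    ∀ z : ℂ, ‖z‖ < R / q ^ k →
      HasSum (fun m => (∏ i ∈ Finset.range k, (pqInt p q (m + i + 1) : ℂ)) * c (m + k) * z ^ m)
        (pqDerivIter p q k f z) := by
  have hp0 : (0:ℝ) < p := lt_trans one_pos hp
  have hq0 : (0:ℝ) < q := lt_trans hp0 hpq
  have hqpC : ((p:ℂ) - q) ≠ 0 := by
    simp only [ne_eq, sub_eq_zero]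
    exact_mod_cast ne_of_lt hpq
  induction k with
  | zero => intro z hz; simpa [pqDerivIter] using hf z (by simpa using hz)
  | succ k ih =>
    intro z hz
    have hρk : (0:ℝ) < R / q ^ k := by positivity
    set g : ℂ → ℂ := pqDerivIter p q k f with hg
    set d : ℕ → ℂ := fun m => (∏ i ∈ Finset.range k, (pqInt p q (m + i + 1) : ℂ)) * c (m + k)
      with hd
    have ihg : ∀ w : ℂ, ‖w‖ < R / q ^ k → HasSum (fun m => d m * w ^ m) (g w) := ih
    have hrel : ∀ m : ℕ,
        (∏ i ∈ Finset.range (k+1), (pqInt p q (m + i + 1) : ℂ)) * c (m + (k+1))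
          = d (m+1) * (pqInt p q (m+1) : ℂ) := by
      intro m
      rw [hd]
      simp only []
      rw [Finset.prod_range_succ']
      have hidx : ∀ i : ℕ, m + (i + 1) + 1 = (m + 1) + i + 1 := by omega
      simp only [hidx]
      have h2 : m + 1 + k = m + (k + 1) := by omega
      rw [h2]
      ring
    rcases eq_or_ne z 0 with rfl | hz0
    · have hder : deriv g 0 = d 1 := deriv_zero_of_hasSum hρk ihg
      have hv : pqDerivIter p q (k+1) f 0 = d 1 := by
        show pqDeriv p q g 0 = d 1
        rw [pqDeriv, if_pos rfl, hder]
      rw [hv]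
      have h1 : HasSum (fun m => ((∏ i ∈ Finset.range (k+1), (pqInt p q (m + i + 1) : ℂ)) *
          c (m + (k+1))) * (0:ℂ) ^ m)
          ((∏ i ∈ Finset.range (k+1), (pqInt p q (0 + i + 1) : ℂ)) * c (0 + (k+1))) := by
        have := hasSum_single (f := fun m => ((∏ i ∈ Finset.range (k+1),
            (pqInt p q (m + i + 1) : ℂ)) * c (m + (k+1))) * (0:ℂ) ^ m) 0
          (fun b hb => by simp [zero_pow hb])
        simpa using this
      convert h1 using 1
      rw [hrel 0]
      have hone : pqInt p q 1 = 1 := by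
        have : q - p ≠ 0 := sub_ne_zero.2 (ne_of_gt hpq)
        simp [pqInt, div_self this]
      rw [hone]
      simp
    · have hzpq : ∀ t : ℝ, 0 < t → t ≤ q → ‖(t:ℂ) * z‖ < R / q ^ k := by
        intro t ht htq
        rw [norm_mul, Complex.norm_real, Real.norm_eq_abs, abs_of_pos ht]
        calc t * ‖z‖ ≤ q * ‖z‖ := by nlinarith [norm_nonneg z]
          _ < q * (R / q ^ (k+1)) := by
              apply mul_lt_mul_of_pos_left hz hq0
          _ = R / q ^ k := by
              rw [pow_succ]; field_simp
      have h1 := ihg ((p:ℂ) * z) (hzpq p hp0 hpq.le)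
      have h2 := ihg ((q:ℂ) * z) (hzpq q hq0 le_rfl)
      have H := h1.sub h2
      have hFeq : (fun m => d m * ((p:ℂ) * z) ^ m - d m * ((q:ℂ) * z) ^ m)
          = fun m => d m * ((p:ℂ) ^ m - (q:ℂ) ^ m) * z ^ m := by
        funext m; rw [mul_pow, mul_pow]; ring
      rw [hFeq] at H
      set S : ℂ := g ((p:ℂ) * z) - g ((q:ℂ) * z) with hS
      have H1 : HasSum (fun m => d (m+1) * ((p:ℂ) ^ (m+1) - (q:ℂ) ^ (m+1)) * z ^ (m+1))
          (S - ∑ i ∈ Finset.range 1, d i * ((p:ℂ) ^ i - (q:ℂ) ^ i) * z ^ i) :=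
        (hasSum_nat_add_iff' 1).2 H
      have hzero : (∑ i ∈ Finset.range 1, d i * ((p:ℂ) ^ i - (q:ℂ) ^ i) * z ^ i) = 0 := by
        simp
      rw [hzero, sub_zero] at H1
      have hterm : ∀ m : ℕ, d (m+1) * ((p:ℂ) ^ (m+1) - (q:ℂ) ^ (m+1)) * z ^ (m+1)
          = (((p:ℂ) - q) * z) * ((d (m+1) * (pqInt p q (m+1) : ℂ)) * z ^ m) := by
        intro m
        have hpq' : ((q:ℂ) - p) ≠ 0 := by
          simp only [ne_eq, sub_eq_zero]
          exact_mod_cast (ne_of_gt hpq)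
        have hIm : (pqInt p q (m+1) : ℂ) = ((q:ℂ) ^ (m+1) - (p:ℂ) ^ (m+1)) / ((q:ℂ) - p) := by
          rw [pqInt]
          push_cast
          ring
        rw [hIm]
        field_simp
        ring
      have H2 : HasSum (fun m => (((p:ℂ) - q) * z) * ((d (m+1) * (pqInt p q (m+1) : ℂ)) * z ^ m))
          S := by
        have e : (fun m => d (m+1) * ((p:ℂ) ^ (m+1) - (q:ℂ) ^ (m+1)) * z ^ (m+1))
            = fun m => (((p:ℂ) - q) * z) * ((d (m+1) * (pqInt p q (m+1) : ℂ)) * z ^ m) :=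
          funext hterm
        rwa [e] at H1
      have hC : (((p:ℂ) - q) * z) ≠ 0 := mul_ne_zero hqpC hz0
      have H3 : HasSum (fun m => (d (m+1) * (pqInt p q (m+1) : ℂ)) * z ^ m)
          ((((p:ℂ) - q) * z)⁻¹ * S) := by
        have h4 := H2.mul_left ((((p:ℂ) - q) * z)⁻¹)
        have e : (fun m => (((p:ℂ) - q) * z)⁻¹ * ((((p:ℂ) - q) * z) *
            ((d (m+1) * (pqInt p q (m+1) : ℂ)) * z ^ m)))
            = fun m => (d (m+1) * (pqInt p q (m+1) : ℂ)) * z ^ m := by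
          funext m; rw [← mul_assoc, inv_mul_cancel₀ hC, one_mul]
        rwa [e] at h4
      have hval : pqDerivIter p q (k+1) f z = (((p:ℂ) - q) * z)⁻¹ * S := by
        show pqDeriv p q g z = _
        rw [pqDeriv, if_neg hz0, hS, div_eq_inv_mul]
      rw [hval]
      have e2 : (fun m => (∏ i ∈ Finset.range (k+1), (pqInt p q (m + i + 1) : ℂ)) *
          c (m + (k+1)) * z ^ m)
          = fun m => (d (m+1) * (pqInt p q (m+1) : ℂ)) * z ^ m :=
        funext fun m => by rw [hrel m]
      exact e2 ▸ H3

lemma iter_zero (hp : 1 < p) (hpq : p < q) (hR : 0 < R)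
    (hf : ∀ z : ℂ, ‖z‖ < R → HasSum (fun m => c m * z ^ m) (f z)) (k : ℕ) :
    pqDerivIter p q k f 0 = (pqFact p q k : ℂ) * c k := by
  have hq0 : (0:ℝ) < q := lt_trans (lt_trans one_pos hp) hpq
  have h := iter_rep hp hpq hR hf k 0 (by simpa using (by positivity : (0:ℝ) < R / q ^ k))
  have h2 : HasSum (fun m => (∏ i ∈ Finset.range k, (pqInt p q (m + i + 1) : ℂ)) *
      c (m + k) * (0:ℂ) ^ m)
      ((∏ i ∈ Finset.range k, (pqInt p q (0 + i + 1) : ℂ)) * c (0 + k)) := by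
    have := hasSum_single (f := fun m => (∏ i ∈ Finset.range k,
        (pqInt p q (m + i + 1) : ℂ)) * c (m + k) * (0:ℂ) ^ m) 0
      (fun b hb => by simp [zero_pow hb])
    simpa using this
  have h3 := h.unique h2
  rw [h3]
  have h4 : (pqFact p q k : ℂ) = ∏ i ∈ Finset.range k, (pqInt p q (i + 1) : ℂ) := by
    rw [pqFact_eq_prod hp hpq]
    push_cast
    rfl
  rw [h4]
  norm_num

end iter


theorem lorentz_lower_estimate (R p q r r₁ : ℝ) (hp : 1 < p) (hpq : p < q) (hqR : q < R)
    (hr : 1 ≤ r) (hrr₁ : q ^ 3 * r < p ^ 3 * r₁) (hr₁R : q ^ 4 * r₁ < p ^ 4 * R)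
    (f : ℂ → ℂ) (c : ℕ → ℂ)
    (hf : ∀ z : ℂ, ‖z‖ < R → HasSum (fun k => c k * z ^ k) (f z))
    (hnotlin : ∃ k : ℕ, 2 ≤ k ∧ c k ≠ 0) :
    ∃ C : ℝ, 0 < C ∧ ∀ n : ℕ, 1 ≤ n →
      p ^ n / pqInt p q n * C ≤ supNorm r (fun z => lorentz p q n f z - f z) := by
  obtain ⟨k₀, hk₀2, hc0⟩ := hnotlin
  have hp0 : (0:ℝ) < p := lt_trans one_pos hp
  have hq0 : (0:ℝ) < q := lt_trans hp0 hpq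
  have hq1 : (1:ℝ) < q := lt_trans hp hpq
  have hr0 : (0:ℝ) < r := lt_of_lt_of_le one_pos hr
  have hr₁0 : (0:ℝ) < r₁ := by nlinarith [pow_pos hq0 3, pow_pos hp0 3]
  have hrr₁' : r < r₁ := by nlinarith [pow_pos hq0 3, pow_pos hp0 3, pow_lt_pow_left₀ hpq hp0.le (by norm_num : (3:ℕ) ≠ 0)]
  have hR0 : (0:ℝ) < R := by nlinarith [pow_pos hq0 4, pow_pos hp0 4]
  have hr₁R' : r₁ < R := by nlinarith [pow_pos hq0 4, pow_pos hp0 4, pow_lt_pow_left₀ hpq hp0.le (by norm_num : (4:ℕ) ≠ 0)]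
  have hrR : r < R := lt_trans hrr₁' hr₁R'
  -- the coefficients of the Lorentz polynomial
  set A : ℕ → ℕ → ℂ := fun n k => (q:ℂ) ^ (k * (k-1) / 2) * (pqBinom p q n k : ℂ) *
    (pqFact p q k : ℂ) * c k / ((pqInt p q n : ℂ)) ^ k with hA
  have hlor : ∀ n : ℕ, ∀ z : ℂ, lorentz p q n f z = ∑ k ∈ Finset.range (n+1), A n k * z ^ k := by
    intro n z
    unfold lorentz
    apply Finset.sum_congr rfl
    intro k _
    rw [iter_zero hp hpq hR0 hf k, hA, div_pow]
    field_simp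
  -- constant
  set C : ℝ := ‖c k₀‖ * r ^ k₀ / p with hC
  have hC0 : 0 < C := by
    have : 0 < ‖c k₀‖ := norm_pos_iff.2 hc0
    positivity
  refine ⟨C, hC0, ?_⟩
  intro n hn
  have hIn : 0 < pqInt p q n := pqInt_pos hp hpq hn
  -- coefficients of lorentz - f
  set a : ℕ → ℂ := fun m => (if m ≤ n then A n m else 0) - c m with ha
  have hgsum : ∀ z : ℂ, ‖z‖ < R →
      HasSum (fun m => a m * z ^ m) (lorentz p q n f z - f z) := by
    intro z hz
    have hpoly : HasSum (fun m => (if m ≤ n then A n m else 0) * z ^ m)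
        (∑ k ∈ Finset.range (n+1), (if k ≤ n then A n k else 0) * z ^ k) := by
      apply hasSum_sum_of_ne_finset_zero
      intro m hm
      rw [Finset.mem_range, not_lt] at hm
      rw [if_neg (by omega), zero_mul]
    have hps : (∑ k ∈ Finset.range (n+1), (if k ≤ n then A n k else 0) * z ^ k)
        = lorentz p q n f z := by
      rw [hlor n z]
      apply Finset.sum_congr rfl
      intro k hk
      rw [if_pos (by rw [Finset.mem_range] at hk; omega)]
    rw [hps] at hpoly
    have := hpoly.sub (hf z hz)
    have e : (fun m => (if m ≤ n then A n m else 0) * z ^ m - c m * z ^ m)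
        = fun m => a m * z ^ m := by
      funext m; rw [ha]; simp only []; ring
    rwa [e] at this
  have key := coeff_bound hr0 hrR hgsum k₀
  -- two cases
  by_cases hcase : k₀ ≤ n
  · -- main case: n ≥ k₀
    set B : ℝ := q ^ (k₀ * (k₀-1) / 2) * pqBinom p q n k₀ * pqFact p q k₀ / pqInt p q n ^ k₀
      with hB
    have hAB : A n k₀ = (B : ℂ) * c k₀ := by
      rw [hA, hB]
      push_cast
      ring
    have hak : a k₀ = ((B - 1 : ℝ) : ℂ) * c k₀ := by
      rw [ha]
      simp only [if_pos hcase]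
      rw [hAB]
      push_cast
      ring
    have hBle : B ≤ 1 - p ^ (n-1) / pqInt p q n := b_le hp hpq hk₀2 hcase
    have hpn : 0 < p ^ (n-1) / pqInt p q n := by positivity
    have hnorm : ‖a k₀‖ = (1 - B) * ‖c k₀‖ := by
      rw [hak, norm_mul, Complex.norm_real, Real.norm_eq_abs, abs_of_nonpos (by linarith)]
      ring_nf
    have hlow : p ^ (n-1) / pqInt p q n * ‖c k₀‖ ≤ ‖a k₀‖ := by
      rw [hnorm]
      apply mul_le_mul_of_nonneg_right _ (norm_nonneg _)
      linarith
    have hid : p ^ n / pqInt p q n * C = (p ^ (n-1) / pqInt p q n * ‖c k₀‖) * r ^ k₀ := by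
      rw [hC]
      have hpow : p ^ (n-1) * p = p ^ n := by rw [← pow_succ]; congr 1; omega
      field_simp
      rw [← hpow]
      ring
    rw [hid]
    calc (p ^ (n-1) / pqInt p q n * ‖c k₀‖) * r ^ k₀
        ≤ ‖a k₀‖ * r ^ k₀ := mul_le_mul_of_nonneg_right hlow (by positivity)
      _ ≤ _ := key
  · -- small n: n < k₀
    have hak : a k₀ = -c k₀ := by
      rw [ha]
      simp only [if_neg hcase]
      ring
    have hnorm : ‖a k₀‖ = ‖c k₀‖ := by rw [hak, norm_neg]
    have hstep : p ^ n / pqInt p q n ≤ p := by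
      rw [div_le_iff₀ hIn]
      have h1 : p ^ (n-1) ≤ pqInt p q n := pqInt_ge hp hpq hn
      have hpow : p * p ^ (n-1) = p ^ n := by rw [← pow_succ']; congr 1; omega
      nlinarith
    calc p ^ n / pqInt p q n * C ≤ p * C :=
          mul_le_mul_of_nonneg_right hstep hC0.le
      _ = ‖c k₀‖ * r ^ k₀ := by rw [hC]; field_simp
      _ = ‖a k₀‖ * r ^ k₀ := by rw [hnorm]
      _ ≤ _ := key
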